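/- Let v : A → Γ ∪ {0} be a rank-1 valuation on a ring A with the v-topology, and suppose A contains a topologically nilpotent unit ϖ. If f ∈ A is power-bounded then v(f) ≤ 1. -/

import Mathlib

/-- For a rank-1 valued ring `A` (valuation topology) containing a
topologically nilpotent unit `ϖ`, any power-bounded `f` satisfies `v f ≤ 1`. -/
theorem stmt8 {A Γ : Type*} [CommRing A] [LinearOrderedCommGroupWithZero Γ]
    [hv : Valued A Γ]
    (hrank : ∀ γ δ : Γ, γ ≠ 0 → δ ≠ 0 → γ < 1 → ∃ n : ℕ, γ ^ n < δ)
    (ϖ : A) (hϖu : IsUnit ϖ)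
    (hϖ : Filter.Tendsto (fun n : ℕ => ϖ ^ n) Filter.atTop (nhds 0))
    (f : A)
    (hbd : ∀ U ∈ nhds (0 : A), ∃ V ∈ nhds (0 : A), ∀ x ∈ V, ∀ n : ℕ, x * f ^ n ∈ U) :
    hv.v f ≤ 1 := by
  by_contra hf
  push_neg at hf
  have hf0 : hv.v f ≠ 0 := fun h => by simp [h] at hf
  -- v ϖ ≠ 0 since ϖ is a unit
  obtain ⟨u, rfl⟩ := hϖu
  have hϖ0 : hv.v (u : A) ≠ 0 := by
    intro h
    have : hv.v ((u : A) * (↑u⁻¹ : A)) = 0 := by rw [map_mul, h, zero_mul]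
    rw [Units.mul_inv, map_one] at this
    exact one_ne_zero this
  -- the open ball of radius 1 is a neighborhood of 0
  have hU : {x : A | hv.v x < 1} ∈ nhds (0 : A) := by
    rw [Valued.mem_nhds]
    exact ⟨1, by simp⟩
  obtain ⟨V, hV, hVb⟩ := hbd _ hU
  -- some power of ϖ lies in V
  have : ∀ᶠ n : ℕ in Filter.atTop, (u : A) ^ n ∈ V := hϖ.eventually_mem hV
  obtain ⟨k, hk⟩ := this.exists
  have hkey : ∀ n : ℕ, hv.v ((u : A)) ^ k * hv.v f ^ n < 1 := by
    intro n
    have := hVb _ hk n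
    simpa [map_mul, map_pow] using this
  -- rank-1: (v f)⁻¹ ^ n < (v ϖ)^k for some n
  have hinv : (hv.v f)⁻¹ < 1 := by
    rw [inv_lt_one₀ (lt_of_le_of_ne (zero_le') (Ne.symm hf0))]
    exact hf
  obtain ⟨n, hn⟩ := hrank (hv.v f)⁻¹ (hv.v (u : A) ^ k) (by simp [hf0]) (pow_ne_zero _ hϖ0) hinv
  have h1 : (1 : Γ) < hv.v ((u : A)) ^ k * hv.v f ^ n := by
    rw [inv_pow] at hn
    have := mul_lt_mul_of_pos_left hn (zero_lt_iff.mpr (pow_ne_zero n hf0))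
    rwa [mul_inv_cancel₀ (pow_ne_zero _ hf0), mul_comm] at this
  exact absurd (hkey n) (not_lt.mpr h1.le)
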